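/- Let P_L have CDF F, p_G ∈ ℝ, p ≤ q, and P_G = P_L − clip(P_L − p_G, p, q). Then the CDF F_G of P_G satisfies F_G(t) = F(t + p) for t < p_G and F_G(t) = F(t + q) for t ≥ p_G. -/
import Mathlib


open MeasureTheory

noncomputable def clip (x a b : ℝ) : ℝ := max a (min x b)

lemma clip_key1 (x p_G p q t : ℝ) (hpq : p ≤ q) (ht : t < p_G) :
    x - clip (x - p_G) p q ≤ t ↔ x ≤ t + p := by
  unfold clip
  rcases le_total (x - p_G) p with h1 | h1
  · rw [max_eq_left (min_le_of_left_le h1)]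
    constructor <;> intro <;> linarith
  · rcases le_total (x - p_G) q with h2 | h2
    · rw [min_eq_left h2, max_eq_right h1]
      constructor <;> intro <;> linarith
    · rw [min_eq_right h2, max_eq_right hpq]
      constructor <;> intro <;> linarith

lemma clip_key2 (x p_G p q t : ℝ) (hpq : p ≤ q) (ht : p_G ≤ t) :
    x - clip (x - p_G) p q ≤ t ↔ x ≤ t + q := by
  unfold clip
  rcases le_total (x - p_G) p with h1 | h1
  · rw [max_eq_left (min_le_of_left_le h1)]
    constructor <;> intro <;> linarith
  · rcases le_total (x - p_G) q with h2 | h2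
    · rw [min_eq_left h2, max_eq_right h1]
      constructor <;> intro <;> linarith
    · rw [min_eq_right h2, max_eq_right hpq]
      constructor <;> intro <;> linarith

theorem stmt_18 {Ω : Type*} [MeasurableSpace Ω] (μ : Measure Ω) [IsProbabilityMeasure μ]
    (P_L : Ω → ℝ) (hmeas : Measurable P_L) (p_G p q : ℝ) (hpq : p ≤ q)
    (P_G : Ω → ℝ) (hPG : ∀ ω, P_G ω = P_L ω - clip (P_L ω - p_G) p q)
    (F F_G : ℝ → ℝ)
    (hF : ∀ x, F x = (μ {ω | P_L ω ≤ x}).toReal)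
    (hFG : ∀ t, F_G t = (μ {ω | P_G ω ≤ t}).toReal) :
    (∀ t, t < p_G → F_G t = F (t + p)) ∧ (∀ t, p_G ≤ t → F_G t = F (t + q)) := by
  constructor
  · intro t ht
    rw [hFG, hF]
    congr 2
    ext ω
    simp only [Set.mem_setOf_eq, hPG]
    exact clip_key1 _ _ _ _ _ hpq ht
  · intro t ht
    rw [hFG, hF]
    congr 2
    ext ω
    simp only [Set.mem_setOf_eq, hPG]
    exact clip_key2 _ _ _ _ _ hpq ht
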